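/- Let K > 0 and let w, z ∈ ℝⁿ with Euclidean distance e = |w − z| > 0. Let Σ be the hyperplane {y : yⁿ = wⁿ − (K+1)e}, let C̊ = ℝ_{>0}·(B_{ℝⁿ⁻¹}(0,1) × {K}) be the open downward-shifted cone construction (so that w − C̊ and z − C̊ are cones opening downward with slope K), and let Π: ℝⁿ → ℝⁿ⁻¹ be projection onto the first n−1 coordinates. Suppose |zⁿ − wⁿ| ≤ e. Then P := Π((w − C̊) ∩ Σ) is a ball of radius (1 + 1/K)e centred at Π(w), Q := Π((z − C̊) ∩ Σ) is a ball of radius ((K+1)e + zⁿ − wⁿ)/K ≥ e centred at Π(z), and P ∩ Q is nonempty. -/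

import Mathlib

open Set Topology

/-- Append a last coordinate to a vector of `ℝⁿ`, giving a vector of `ℝⁿ⁺¹`. -/
noncomputable def snocE {n : ℕ} (v : EuclideanSpace ℝ (Fin n)) (a : ℝ) :
    EuclideanSpace ℝ (Fin (n + 1)) :=
  WithLp.toLp 2 (Fin.snoc (fun j => v j) a)

/-- Projection of `ℝⁿ⁺¹` onto the first `n` coordinates. -/
noncomputable def projE {n : ℕ} (y : EuclideanSpace ℝ (Fin (n + 1))) :
    EuclideanSpace ℝ (Fin n) :=
  WithLp.toLp 2 (fun i : Fin n => y i.castSucc)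

/-- The open cone `C̊ = ℝ_{>0} · (B_{ℝⁿ}(0,1) × {K})` with axis the last coordinate. -/
def coneSet (n : ℕ) (K : ℝ) : Set (EuclideanSpace ℝ (Fin (n + 1))) :=
  {c | ∃ t : ℝ, 0 < t ∧ ∃ v : EuclideanSpace ℝ (Fin n), ‖v‖ < 1 ∧ c = t • snocE v K}

lemma cone_slice {n : ℕ} (K : ℝ) (hK : 0 < K) (p : EuclideanSpace ℝ (Fin (n + 1)))
    (h t : ℝ) (ht : 0 < t) (hth : p (Fin.last n) - h = t * K) :
    projE '' (((fun c => p - c) '' coneSet n K) ∩ {y | y (Fin.last n) = h}) =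
      Metric.ball (projE p) t := by
  ext u
  constructor
  · rintro ⟨y, ⟨⟨c, ⟨s, hs, v, hv, rfl⟩, rfl⟩, hy⟩, rfl⟩
    have hy' : p (Fin.last n) - s * K = h := by
      have : (p - s • snocE v K) (Fin.last n) = h := hy
      simpa [snocE] using this
    replace hy := hy'
    show projE (p - s • snocE v K) ∈ Metric.ball (projE p) t
    have hst : s = t := by
      have : s * K = t * K := by linarith
      exact mul_right_cancel₀ hK.ne' this
    subst hst
    have hproj : projE (p - s • snocE v K) = projE p - s • v := by
      ext i
      show (p - s • snocE v K) i.castSucc = p i.castSucc - s * v i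
      simp [snocE]
    rw [hproj]
    rw [Metric.mem_ball, dist_eq_norm]
    have : projE p - s • v - projE p = -(s • v) := by abel
    rw [this, norm_neg, norm_smul, Real.norm_eq_abs, abs_of_pos hs]
    calc s * ‖v‖ < s * 1 := by exact (mul_lt_mul_iff_right₀ hs).mpr hv
    _ = s := mul_one s
  · intro hu
    rw [Metric.mem_ball, dist_eq_norm] at hu
    set v : EuclideanSpace ℝ (Fin n) := t⁻¹ • (projE p - u) with hv
    have hvn : ‖v‖ < 1 := by
      rw [hv, norm_smul, Real.norm_eq_abs, abs_of_pos (inv_pos.mpr ht)]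
      rw [show u - projE p = -(projE p - u) by abel, norm_neg] at hu
      calc t⁻¹ * ‖projE p - u‖ < t⁻¹ * t := by exact (mul_lt_mul_iff_right₀ (inv_pos.mpr ht)).mpr hu
      _ = 1 := inv_mul_cancel₀ ht.ne'
    refine ⟨p - t • snocE v K, ⟨⟨t • snocE v K, ⟨t, ht, v, hvn, rfl⟩, rfl⟩, ?_⟩, ?_⟩
    · show (p - t • snocE v K) (Fin.last n) = h
      simp [snocE]; linarith
    · ext i
      show (p - t • snocE v K) i.castSucc = u i
      have h1 : (t • snocE v K) i.castSucc = t * v i := by simp [snocE]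
      have h2 : v i = t⁻¹ * (p i.castSucc - u i) := rfl
      show p i.castSucc - (t • snocE v K) i.castSucc = u i
      rw [h1, h2, ← mul_assoc, mul_inv_cancel₀ ht.ne', one_mul]
      ring

/-- Cone-intersection lemma: the downward cones at `w` and `z`, cut by the horizontal
hyperplane `Σ = {yⁿ = wⁿ − (K+1)e}` and projected to the first `n` coordinates, are the open
balls of radii `(1 + 1/K)e` about `Π(w)` and `((K+1)e + zⁿ − wⁿ)/K ≥ e` about `Π(z)`
respectively, and these balls intersect. -/
theorem cone_sections_are_balls_and_intersect {n : ℕ} (K : ℝ) (hK : 0 < K)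
    (w z : EuclideanSpace ℝ (Fin (n + 1)))
    (e : ℝ) (he : e = ‖w - z‖) (hepos : 0 < e)
    (hvert : |z (Fin.last n) - w (Fin.last n)| ≤ e) :
    let Sig : Set (EuclideanSpace ℝ (Fin (n + 1))) :=
      {y | y (Fin.last n) = w (Fin.last n) - (K + 1) * e}
    let P : Set (EuclideanSpace ℝ (Fin n)) :=
      projE '' (((fun c => w - c) '' coneSet n K) ∩ Sig)
    let Q : Set (EuclideanSpace ℝ (Fin n)) :=
      projE '' (((fun c => z - c) '' coneSet n K) ∩ Sig)
    P = Metric.ball (projE w) ((1 + 1 / K) * e) ∧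
    Q = Metric.ball (projE z) (((K + 1) * e + (z (Fin.last n) - w (Fin.last n))) / K) ∧
    e ≤ ((K + 1) * e + (z (Fin.last n) - w (Fin.last n))) / K ∧
    (P ∩ Q).Nonempty := by
  intro Sig P Q
  have habs := abs_le.mp hvert
  set r1 : ℝ := (1 + 1 / K) * e with hr1
  set r2 : ℝ := ((K + 1) * e + (z (Fin.last n) - w (Fin.last n))) / K with hr2
  have hr1pos : 0 < r1 := by
    apply mul_pos _ hepos
    have : 0 < 1 / K := by positivity
    linarith
  have hr2e : e ≤ r2 := by
    rw [hr2, le_div_iff₀ hK]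
    nlinarith
  have hr2pos : 0 < r2 := lt_of_lt_of_le hepos hr2e
  have hP : P = Metric.ball (projE w) r1 := by
    apply cone_slice K hK w _ r1 hr1pos
    rw [hr1]; field_simp; ring
  have hQ : Q = Metric.ball (projE z) r2 := by
    apply cone_slice K hK z _ r2 hr2pos
    rw [hr2]; field_simp; ring
  refine ⟨hP, hQ, hr2e, ?_⟩
  rw [hP, hQ]
  -- distance between centres ≤ e
  have hd : dist (projE w) (projE z) ≤ e := by
    rw [dist_eq_norm, he]
    have : projE w - projE z = projE (w - z) := by ext i; rfl
    rw [this]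
    rw [EuclideanSpace.norm_eq, EuclideanSpace.norm_eq]
    apply Real.sqrt_le_sqrt
    rw [show (Finset.univ : Finset (Fin (n+1))) = Finset.univ by rfl]
    have := Fin.sum_univ_castSucc (f := fun j => ‖(w - z) j‖ ^ 2)
    rw [this]
    have hnn : (0:ℝ) ≤ ‖(w - z) (Fin.last n)‖ ^ 2 := by positivity
    have heq : ∑ i : Fin n, ‖projE (w - z) i‖ ^ 2 = ∑ i : Fin n, ‖(w - z) i.castSucc‖ ^ 2 := by simp [projE]
    linarith [heq]
  have hdlt : dist (projE w) (projE z) < r1 + r2 := by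
    have : e < r1 := by
      rw [hr1]
      have h1 : (1:ℝ) < 1 + 1 / K := by
        have : 0 < 1 / K := by positivity
        linarith
      nlinarith
    linarith
  -- point on segment
  set d := dist (projE w) (projE z) with hdd
  set x : EuclideanSpace ℝ (Fin n) :=
    projE w + (r1 / (r1 + r2)) • (projE z - projE w) with hx
  refine ⟨x, ?_, ?_⟩
  · rw [Metric.mem_ball, dist_eq_norm, hx]
    have : projE w + (r1 / (r1 + r2)) • (projE z - projE w) - projE w
        = (r1 / (r1 + r2)) • (projE z - projE w) := by abel
    rw [this, norm_smul, Real.norm_eq_abs, abs_of_pos (by positivity)]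
    have hnorm : ‖projE z - projE w‖ = d := by
      rw [hdd, dist_eq_norm, ← norm_neg]; congr 1; abel
    rw [hnorm]
    calc r1 / (r1 + r2) * d < r1 / (r1 + r2) * (r1 + r2) := by
          apply mul_lt_mul_of_pos_left hdlt (by positivity)
      _ = r1 := by field_simp
  · rw [Metric.mem_ball, dist_eq_norm, hx]
    have : projE w + (r1 / (r1 + r2)) • (projE z - projE w) - projE z
        = -((1 - r1 / (r1 + r2)) • (projE z - projE w)) := by
      rw [sub_smul, one_smul]; abel
    rw [this, norm_neg, norm_smul, Real.norm_eq_abs]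
    have h12 : 1 - r1 / (r1 + r2) = r2 / (r1 + r2) := by field_simp; ring
    rw [h12, abs_of_pos (by positivity)]
    have hnorm : ‖projE z - projE w‖ = d := by
      rw [hdd, dist_eq_norm, ← norm_neg]; congr 1; abel
    rw [hnorm]
    calc r2 / (r1 + r2) * d < r2 / (r1 + r2) * (r1 + r2) := by
          apply mul_lt_mul_of_pos_left hdlt (by positivity)
      _ = r2 := by field_simp
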